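/- For every natural number t and every prime p ≥ 23, neither the p-th cyclotomic polynomial Φ_p(x) nor the 2p-th cyclotomic polynomial Φ_{2p}(x) divides R_t(x) in ℤ[x]. -/
import Mathlib

open Polynomial

/-- The polynomial `R_t(x)`. -/
noncomputable def Rpoly (t : ℕ) : Polynomial ℤ :=
  X ^ (8 * t + 15) + X ^ (8 * t + 14) + X ^ (8 * t + 11) - X ^ (8 * t + 10) - X ^ (8 * t + 8)
    + 2 * X ^ (6 * t + 9) - X ^ (4 * t + 15) - X ^ (4 * t + 11) - X ^ (4 * t + 9)
    + 2 * X ^ (4 * t + 8) - 2 * X ^ (4 * t + 7) + X ^ (4 * t + 6) + X ^ (4 * t + 4)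
    + X ^ (4 * t) - 2 * X ^ (2 * t + 6) + X ^ 7 + X ^ 5 - X ^ 4 - X - 1

namespace RpolyAux

lemma neg1odd {n : ℕ} (h : n % 2 = 1) : (-1 : ℤ) ^ n = -1 :=
  Odd.neg_one_pow (Nat.odd_iff.mpr h)

lemma neg1even {n : ℕ} (h : n % 2 = 0) : (-1 : ℤ) ^ n = 1 :=
  Even.neg_one_pow (Nat.even_iff.mpr h)

lemma cast_descFactorial (n k : ℕ) :
    ((n.descFactorial k : ℤ)) = ∏ j ∈ Finset.range k, ((n : ℤ) - j) := by
  induction k with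
  | zero => simp
  | succ k ih =>
    rcases le_or_gt k n with h | h
    · rw [Nat.descFactorial_succ, Finset.prod_range_succ, ← ih]
      push_cast [h]
      ring
    · rw [Nat.descFactorial_eq_zero_iff_lt.mpr (show n < k+1 by omega),
        Finset.prod_range_succ, ← ih, Nat.descFactorial_eq_zero_iff_lt.mpr h]
      simp

lemma eval_iter (b : ℤ) (k n : ℕ) :
    eval b (derivative^[k] (X ^ n : Polynomial ℤ)) =
      (∏ j ∈ Finset.range k, ((n : ℤ) - j)) * b ^ (n - k) := by
  rw [iterate_derivative_X_pow_eq_C_mul, eval_mul, eval_C, eval_pow, eval_X, cast_descFactorial]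

lemma ev1 (b : ℤ) (n : ℕ) :
    eval b (derivative^[1] (X ^ n : Polynomial ℤ)) = (n : ℤ) * b ^ (n - 1) := by
  rw [eval_iter, show (1:ℕ) = 0+1 from rfl, Finset.prod_range_succ, Finset.prod_range_zero]
  ring

lemma ev2 (b : ℤ) (n : ℕ) :
    eval b (derivative^[2] (X ^ n : Polynomial ℤ)) = (n : ℤ) * ((n:ℤ)-1) * b ^ (n - 2) := by
  rw [eval_iter, show (2:ℕ) = 0+1+1 from rfl, Finset.prod_range_succ, Finset.prod_range_succ,
    Finset.prod_range_zero]
  push_cast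
  ring

lemma ev3 (b : ℤ) (n : ℕ) :
    eval b (derivative^[3] (X ^ n : Polynomial ℤ)) =
      (n : ℤ) * ((n:ℤ)-1) * ((n:ℤ)-2) * b ^ (n - 3) := by
  rw [eval_iter, show (3:ℕ) = 0+1+1+1 from rfl, Finset.prod_range_succ, Finset.prod_range_succ,
    Finset.prod_range_succ, Finset.prod_range_zero]
  push_cast
  ring

lemma ev4 (b : ℤ) (n : ℕ) :
    eval b (derivative^[4] (X ^ n : Polynomial ℤ)) =
      (n : ℤ) * ((n:ℤ)-1) * ((n:ℤ)-2) * ((n:ℤ)-3) * b ^ (n - 4) := by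
  rw [eval_iter, show (4:ℕ) = 0+1+1+1+1 from rfl, Finset.prod_range_succ, Finset.prod_range_succ,
    Finset.prod_range_succ, Finset.prod_range_succ, Finset.prod_range_zero]
  push_cast
  ring

lemma ev5 (b : ℤ) (n : ℕ) :
    eval b (derivative^[5] (X ^ n : Polynomial ℤ)) =
      (n : ℤ) * ((n:ℤ)-1) * ((n:ℤ)-2) * ((n:ℤ)-3) * ((n:ℤ)-4) * b ^ (n - 5) := by
  rw [eval_iter, show (5:ℕ) = 0+1+1+1+1+1 from rfl, Finset.prod_range_succ, Finset.prod_range_succ,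
    Finset.prod_range_succ, Finset.prod_range_succ, Finset.prod_range_succ, Finset.prod_range_zero]
  push_cast
  ring

lemma ev6 (b : ℤ) (n : ℕ) :
    eval b (derivative^[6] (X ^ n : Polynomial ℤ)) =
      (n : ℤ) * ((n:ℤ)-1) * ((n:ℤ)-2) * ((n:ℤ)-3) * ((n:ℤ)-4) * ((n:ℤ)-5) * b ^ (n - 6) := by
  rw [eval_iter, show (6:ℕ) = 0+1+1+1+1+1+1 from rfl, Finset.prod_range_succ,
    Finset.prod_range_succ, Finset.prod_range_succ, Finset.prod_range_succ, Finset.prod_range_succ,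
    Finset.prod_range_succ, Finset.prod_range_zero]
  push_cast
  ring

lemma Rpoly_eq (t : ℕ) : Rpoly t =
    X ^ (8*t+15) + X ^ (8*t+14) + X ^ (8*t+11) - X ^ (8*t+10) - X ^ (8*t+8)
      + (X ^ (6*t+9) + X ^ (6*t+9)) - X ^ (4*t+15) - X ^ (4*t+11) - X ^ (4*t+9)
      + (X ^ (4*t+8) + X ^ (4*t+8)) - (X ^ (4*t+7) + X ^ (4*t+7)) + X ^ (4*t+6) + X ^ (4*t+4)
      + X ^ (4*t) - (X ^ (2*t+6) + X ^ (2*t+6)) + X ^ 7 + X ^ 5 - X ^ 4 - X ^ 1 - X ^ 0 := by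
  unfold Rpoly
  ring

end RpolyAux

namespace RpolyAux

lemma iterate_derivative_add {k : ℕ} {f g : Polynomial ℤ} :
    derivative^[k] (f + g) = derivative^[k] f + derivative^[k] g := by
  induction k generalizing f g with
  | zero => rfl
  | succ k ih => simp only [Function.iterate_succ_apply, derivative_add, ih]

lemma Rpoly_eval_one (t : ℕ) : eval 1 (Rpoly t) = 0 := by
  simp only [Rpoly_eq, eval_add, eval_sub, eval_pow, eval_X, one_pow]
  norm_num

lemma Rpoly_eval_neg_one (t : ℕ) : eval (-1) (Rpoly t) = 0 := by
  simp only [Rpoly_eq, eval_add, eval_sub, eval_pow, eval_X,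
    (show ∀ s:ℕ, (-1:ℤ)^(8*s+15) = -1 from fun s => RpolyAux.neg1odd (by omega)),
    (show ∀ s:ℕ, (-1:ℤ)^(8*s+14) = 1 from fun s => RpolyAux.neg1even (by omega)),
    (show ∀ s:ℕ, (-1:ℤ)^(8*s+11) = -1 from fun s => RpolyAux.neg1odd (by omega)),
    (show ∀ s:ℕ, (-1:ℤ)^(8*s+10) = 1 from fun s => RpolyAux.neg1even (by omega)),
    (show ∀ s:ℕ, (-1:ℤ)^(8*s+8) = 1 from fun s => RpolyAux.neg1even (by omega)),
    (show ∀ s:ℕ, (-1:ℤ)^(6*s+9) = -1 from fun s => RpolyAux.neg1odd (by omega)),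
    (show ∀ s:ℕ, (-1:ℤ)^(4*s+15) = -1 from fun s => RpolyAux.neg1odd (by omega)),
    (show ∀ s:ℕ, (-1:ℤ)^(4*s+11) = -1 from fun s => RpolyAux.neg1odd (by omega)),
    (show ∀ s:ℕ, (-1:ℤ)^(4*s+9) = -1 from fun s => RpolyAux.neg1odd (by omega)),
    (show ∀ s:ℕ, (-1:ℤ)^(4*s+8) = 1 from fun s => RpolyAux.neg1even (by omega)),
    (show ∀ s:ℕ, (-1:ℤ)^(4*s+7) = -1 from fun s => RpolyAux.neg1odd (by omega)),
    (show ∀ s:ℕ, (-1:ℤ)^(4*s+6) = 1 from fun s => RpolyAux.neg1even (by omega)),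
    (show ∀ s:ℕ, (-1:ℤ)^(4*s+4) = 1 from fun s => RpolyAux.neg1even (by omega)),
    (show ∀ s:ℕ, (-1:ℤ)^(4*s) = 1 from fun s => RpolyAux.neg1even (by omega)),
    (show ∀ s:ℕ, (-1:ℤ)^(2*s+6) = 1 from fun s => RpolyAux.neg1even (by omega))]
  norm_num

lemma Eval1 (t : ℕ) : eval 1 (derivative^[1] (Rpoly t)) = 16*(t:ℤ) + 12 := by
  simp only [Rpoly_eq, iterate_derivative_add, iterate_derivative_sub, eval_add, eval_sub,
    ev1, one_pow]
  push_cast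
  ring

lemma Eval3 (t : ℕ) : eval 1 (derivative^[3] (Rpoly t)) = 928*(t:ℤ)^3 + 4536*(t:ℤ)^2 + 6440*(t:ℤ) + 2034 := by
  simp only [Rpoly_eq, iterate_derivative_add, iterate_derivative_sub, eval_add, eval_sub,
    ev3, one_pow]
  push_cast
  ring

lemma Eval5 (t : ℕ) : eval 1 (derivative^[5] (Rpoly t)) = 48256*(t:ℤ)^5 + 470240*(t:ℤ)^4 + 1547840*(t:ℤ)^3 + 2250040*(t:ℤ)^2 + 1411824*(t:ℤ) + 228720 := by
  simp only [Rpoly_eq, iterate_derivative_add, iterate_derivative_sub, eval_add, eval_sub,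
    ev5, one_pow]
  push_cast
  ring

lemma Eval2 (t : ℕ) : eval (-1) (derivative^[2] (Rpoly t)) = -112*(t:ℤ)^2 - 144*(t:ℤ) + 68 := by
  simp only [Rpoly_eq, iterate_derivative_add, iterate_derivative_sub, eval_add, eval_sub,
    ev2,
    (show ∀ s:ℕ, (-1:ℤ)^(8*s+15-2) = -1 from fun s => RpolyAux.neg1odd (by omega)),
    (show ∀ s:ℕ, (-1:ℤ)^(8*s+14-2) = 1 from fun s => RpolyAux.neg1even (by omega)),
    (show ∀ s:ℕ, (-1:ℤ)^(8*s+11-2) = -1 from fun s => RpolyAux.neg1odd (by omega)),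
    (show ∀ s:ℕ, (-1:ℤ)^(8*s+10-2) = 1 from fun s => RpolyAux.neg1even (by omega)),
    (show ∀ s:ℕ, (-1:ℤ)^(8*s+8-2) = 1 from fun s => RpolyAux.neg1even (by omega)),
    (show ∀ s:ℕ, (-1:ℤ)^(6*s+9-2) = -1 from fun s => RpolyAux.neg1odd (by omega)),
    (show ∀ s:ℕ, (-1:ℤ)^(4*s+15-2) = -1 from fun s => RpolyAux.neg1odd (by omega)),
    (show ∀ s:ℕ, (-1:ℤ)^(4*s+11-2) = -1 from fun s => RpolyAux.neg1odd (by omega)),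
    (show ∀ s:ℕ, (-1:ℤ)^(4*s+9-2) = -1 from fun s => RpolyAux.neg1odd (by omega)),
    (show ∀ s:ℕ, (-1:ℤ)^(4*s+8-2) = 1 from fun s => RpolyAux.neg1even (by omega)),
    (show ∀ s:ℕ, (-1:ℤ)^(4*s+7-2) = -1 from fun s => RpolyAux.neg1odd (by omega)),
    (show ∀ s:ℕ, (-1:ℤ)^(4*s+6-2) = 1 from fun s => RpolyAux.neg1even (by omega)),
    (show ∀ s:ℕ, (-1:ℤ)^(4*s+4-2) = 1 from fun s => RpolyAux.neg1even (by omega)),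
    (show ∀ s:ℕ, (-1:ℤ)^(4*s-2) = 1 from fun s => RpolyAux.neg1even (by omega)),
    (show ∀ s:ℕ, (-1:ℤ)^(2*s+6-2) = 1 from fun s => RpolyAux.neg1even (by omega))]
  push_cast
  norm_num
  ring

lemma Eval4 (t : ℕ) : eval (-1) (derivative^[4] (Rpoly t)) = -12352*(t:ℤ)^4 - 50112*(t:ℤ)^3 - 65360*(t:ℤ)^2 - 17856*(t:ℤ) + 18000 := by
  simp only [Rpoly_eq, iterate_derivative_add, iterate_derivative_sub, eval_add, eval_sub,
    ev4,
    (show ∀ s:ℕ, (-1:ℤ)^(8*s+15-4) = -1 from fun s => RpolyAux.neg1odd (by omega)),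
    (show ∀ s:ℕ, (-1:ℤ)^(8*s+14-4) = 1 from fun s => RpolyAux.neg1even (by omega)),
    (show ∀ s:ℕ, (-1:ℤ)^(8*s+11-4) = -1 from fun s => RpolyAux.neg1odd (by omega)),
    (show ∀ s:ℕ, (-1:ℤ)^(8*s+10-4) = 1 from fun s => RpolyAux.neg1even (by omega)),
    (show ∀ s:ℕ, (-1:ℤ)^(8*s+8-4) = 1 from fun s => RpolyAux.neg1even (by omega)),
    (show ∀ s:ℕ, (-1:ℤ)^(6*s+9-4) = -1 from fun s => RpolyAux.neg1odd (by omega)),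
    (show ∀ s:ℕ, (-1:ℤ)^(4*s+15-4) = -1 from fun s => RpolyAux.neg1odd (by omega)),
    (show ∀ s:ℕ, (-1:ℤ)^(4*s+11-4) = -1 from fun s => RpolyAux.neg1odd (by omega)),
    (show ∀ s:ℕ, (-1:ℤ)^(4*s+9-4) = -1 from fun s => RpolyAux.neg1odd (by omega)),
    (show ∀ s:ℕ, (-1:ℤ)^(4*s+8-4) = 1 from fun s => RpolyAux.neg1even (by omega)),
    (show ∀ s:ℕ, (-1:ℤ)^(4*s+7-4) = -1 from fun s => RpolyAux.neg1odd (by omega)),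
    (show ∀ s:ℕ, (-1:ℤ)^(4*s+6-4) = 1 from fun s => RpolyAux.neg1even (by omega)),
    (show ∀ s:ℕ, (-1:ℤ)^(4*s+4-4) = 1 from fun s => RpolyAux.neg1even (by omega)),
    (show ∀ s:ℕ, (-1:ℤ)^(4*s-4) = 1 from fun s => RpolyAux.neg1even (by omega)),
    (show ∀ s:ℕ, (-1:ℤ)^(2*s+6-4) = 1 from fun s => RpolyAux.neg1even (by omega))]
  push_cast
  norm_num
  ring

lemma Eval6 (t : ℕ) : eval (-1) (derivative^[6] (Rpoly t)) = -838912*(t:ℤ)^6 - 4724352*(t:ℤ)^5 - 11261440*(t:ℤ)^4 - 14397600*(t:ℤ)^3 - 8849488*(t:ℤ)^2 - 241728*(t:ℤ) + 1974960 := by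
  simp only [Rpoly_eq, iterate_derivative_add, iterate_derivative_sub, eval_add, eval_sub,
    ev6,
    (show ∀ s:ℕ, (-1:ℤ)^(8*s+15-6) = -1 from fun s => RpolyAux.neg1odd (by omega)),
    (show ∀ s:ℕ, (-1:ℤ)^(8*s+14-6) = 1 from fun s => RpolyAux.neg1even (by omega)),
    (show ∀ s:ℕ, (-1:ℤ)^(8*s+11-6) = -1 from fun s => RpolyAux.neg1odd (by omega)),
    (show ∀ s:ℕ, (-1:ℤ)^(8*s+10-6) = 1 from fun s => RpolyAux.neg1even (by omega)),
    (show ∀ s:ℕ, (-1:ℤ)^(8*s+8-6) = 1 from fun s => RpolyAux.neg1even (by omega)),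
    (show ∀ s:ℕ, (-1:ℤ)^(6*s+9-6) = -1 from fun s => RpolyAux.neg1odd (by omega)),
    (show ∀ s:ℕ, (-1:ℤ)^(4*s+15-6) = -1 from fun s => RpolyAux.neg1odd (by omega)),
    (show ∀ s:ℕ, (-1:ℤ)^(4*s+11-6) = -1 from fun s => RpolyAux.neg1odd (by omega)),
    (show ∀ s:ℕ, (-1:ℤ)^(4*s+9-6) = -1 from fun s => RpolyAux.neg1odd (by omega)),
    (show ∀ s:ℕ, (-1:ℤ)^(4*s+8-6) = 1 from fun s => RpolyAux.neg1even (by omega)),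
    (show ∀ s:ℕ, (-1:ℤ)^(4*s+7-6) = -1 from fun s => RpolyAux.neg1odd (by omega)),
    (show ∀ s:ℕ, (-1:ℤ)^(4*s+6-6) = 1 from fun s => RpolyAux.neg1even (by omega)),
    (show ∀ s:ℕ, (-1:ℤ)^(4*s+4-6) = 1 from fun s => RpolyAux.neg1even (by omega)),
    (show ∀ s:ℕ, (-1:ℤ)^(4*s-6) = 1 from fun s => RpolyAux.neg1even (by omega)),
    (show ∀ s:ℕ, (-1:ℤ)^(2*s+6-6) = 1 from fun s => RpolyAux.neg1even (by omega))]
  push_cast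
  norm_num
  ring

end RpolyAux


namespace RpolyAux

lemma dvd_pow_deriv {R : Type*} [CommRing R] (a : R) (m k : ℕ) (F : Polynomial R)
    (h : (X - C a) ^ m ∣ F) : (X - C a) ^ (m - k) ∣ derivative^[k] F := by
  induction k generalizing m F with
  | zero => simpa using h
  | succ k ih =>
    have h' : (X - C a) ^ (m - 1) ∣ derivative F := by
      obtain ⟨G, rfl⟩ := h
      rw [derivative_mul, derivative_pow, derivative_X_sub_C, mul_one]
      refine dvd_add ⟨C (m : R) * G, by ring⟩
        (Dvd.dvd.mul_right (pow_dvd_pow _ (by omega)) _)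
    rw [Function.iterate_succ_apply]
    have h2 := ih (m - 1) (derivative F) h'
    rwa [show m - 1 - k = m - (k + 1) by omega] at h2

lemma not_X_sub_C_dvd_cyclotomic {a : ℤ} {n : ℕ} (hn : 0 < n) (h1 : n.totient ≠ 1)
    (h : (X - C a) ∣ cyclotomic n ℤ) : False := by
  obtain ⟨c, hc⟩ := h
  rcases (cyclotomic.irreducible hn).isUnit_or_isUnit hc with h2 | h2
  · exact (prime_X_sub_C a).not_unit h2
  · have hc0 : c ≠ 0 := h2.ne_zero
    have hdeg : (cyclotomic n ℤ).natDegree = (X - C a).natDegree + c.natDegree := by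
      rw [hc, natDegree_mul (X_sub_C_ne_zero a) hc0]
    rw [natDegree_cyclotomic, natDegree_X_sub_C,
      Polynomial.natDegree_eq_zero_of_isUnit h2] at hdeg
    omega

lemma crux {p t : ℕ} (hp : p.Prime) {a : ℤ} {m : ℕ}
    (hdvd : cyclotomic m ℤ ∣ Rpoly t)
    (hroot : (Rpoly t).eval a = 0)
    (hm0 : 0 < m)
    (htot : m.totient ≠ 1)
    (hcyc : cyclotomic m (ZMod p) = (X - C ((a : ℤ) : ZMod p)) ^ (p - 1)) :
    ∀ k : ℕ, k < p → (p : ℤ) ∣ (derivative^[k] (Rpoly t)).eval a := by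
  intro k hk
  haveI := Fact.mk hp
  obtain ⟨Q, hQ⟩ := hdvd
  have hXa : (X - C a) ∣ cyclotomic m ℤ * Q := by
    rw [← hQ]; exact dvd_iff_isRoot.mpr hroot
  have hXQ : (X - C a) ∣ Q := by
    rcases (prime_X_sub_C a).2.2 _ _ hXa with h | h
    · exact absurd h (fun hh => not_X_sub_C_dvd_cyclotomic hm0 htot hh)
    · exact h
  obtain ⟨G, hG⟩ := hXQ
  set f := Int.castRingHom (ZMod p) with hf
  have hfa : f a = ((a : ℤ) : ZMod p) := rfl
  have hmap : (X - C ((a : ℤ) : ZMod p)) ^ p ∣ (Rpoly t).map f := by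
    have hpow : (X - C ((a : ℤ) : ZMod p)) ^ (p - 1) * (X - C ((a : ℤ) : ZMod p))
        = (X - C ((a : ℤ) : ZMod p)) ^ p := by
      rw [← pow_succ]
      congr 1
      have := hp.pos
      omega
    refine ⟨G.map f, ?_⟩
    rw [hQ, hG, Polynomial.map_mul, Polynomial.map_mul, Polynomial.map_sub, map_X, map_C,
      map_cyclotomic, hcyc, hfa, ← mul_assoc, hpow]
  have h2 := dvd_pow_deriv ((a : ℤ) : ZMod p) p k _ hmap
  have h3 : (X - C ((a : ℤ) : ZMod p)) ∣ derivative^[k] ((Rpoly t).map f) :=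
    (dvd_pow_self _ (show p - k ≠ 0 by omega)).trans h2
  rw [iterate_derivative_map] at h3
  have h4 : eval ((a : ℤ) : ZMod p) ((derivative^[k] (Rpoly t)).map f) = 0 :=
    dvd_iff_isRoot.mp h3
  have h5 : f (eval a (derivative^[k] (Rpoly t))) = 0 := by
    rw [← eval₂_hom f a, ← eval_map]
    exact h4
  exact (ZMod.intCast_zmod_eq_zero_iff_dvd _ p).mp h5

end RpolyAux

/-- For every natural number `t` and every prime `p ≥ 23`, neither the `p`-th nor the
`2p`-th cyclotomic polynomial divides `R_t(x)` in `ℤ[x]`. -/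
theorem cyclotomic_prime_not_dvd_R (t p : ℕ) (hp : p.Prime) (hp23 : 23 ≤ p) :
    ¬ Polynomial.cyclotomic p ℤ ∣ Rpoly t ∧ ¬ Polynomial.cyclotomic (2 * p) ℤ ∣ Rpoly t := by
  haveI := Fact.mk hp
  constructor
  · intro hdvd
    have htot : p.totient ≠ 1 := by rw [Nat.totient_prime hp]; omega
    have hcyc : cyclotomic p (ZMod p) = (X - C ((1 : ℤ) : ZMod p)) ^ (p - 1) := by
      have hnd : ¬ p ∣ 1 := by simp [Nat.dvd_one, hp.ne_one]
      have h := cyclotomic_mul_prime_eq_pow_of_not_dvd (ZMod p) (n := 1) hnd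
      rw [one_mul] at h
      rw [h, cyclotomic_one]
      norm_num
    have key := RpolyAux.crux hp hdvd (RpolyAux.Rpoly_eval_one t) hp.pos htot hcyc
    have h1 := key 1 (by omega); have h3 := key 3 (by omega); have h5 := key 5 (by omega)
    rw [RpolyAux.Eval1] at h1
    rw [RpolyAux.Eval3] at h3
    rw [RpolyAux.Eval5] at h5
    have hpz : Prime (p : ℤ) := Nat.prime_iff_prime_int.mp hp
    have h4d : (p : ℤ) ∣ 4 * (4 * (t : ℤ) + 3) := by
      rw [show (4 : ℤ) * (4 * (t : ℤ) + 3) = 16 * (t : ℤ) + 12 by ring]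
      exact h1
    have h43 : (p : ℤ) ∣ 4 * (t : ℤ) + 3 := by
      rcases hpz.2.2 _ _ h4d with h | h
      · have hle := Int.le_of_dvd (by norm_num) h
        have hge : (23 : ℤ) ≤ (p : ℤ) := by exact_mod_cast hp23
        omega
      · exact h
    have d1 : (p : ℤ) ∣ 40704 := by
      have e : (40704 : ℤ) = (4 * (t : ℤ) + 3) * (14848 * (t : ℤ)^2 + 61440 * (t : ℤ) + 56960)
          - 64 * (928 * (t : ℤ)^3 + 4536 * (t : ℤ)^2 + 6440 * (t : ℤ) + 2034) := by ring
      rw [e]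
      exact dvd_sub (h43.mul_right _) (h3.mul_left 64)
    have d2 : (p : ℤ) ∣ 82083840 := by
      have e : (82083840 : ℤ) = (4 * (t : ℤ) + 3) * (12353536 * (t : ℤ)^4
            + 111116288 * (t : ℤ)^3 + 312909824 * (t : ℤ)^2 + 341327872 * (t : ℤ) + 105431040)
          - 1024 * (48256 * (t : ℤ)^5 + 470240 * (t : ℤ)^4 + 1547840 * (t : ℤ)^3
            + 2250040 * (t : ℤ)^2 + 1411824 * (t : ℤ) + 228720) := by ring
      rw [e]
      exact dvd_sub (h43.mul_right _) (h5.mul_left 1024)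
    have n1 : p ∣ 40704 := by exact_mod_cast d1
    have n2 : p ∣ 82083840 := by exact_mod_cast d2
    have hg : p ∣ Nat.gcd 40704 82083840 := Nat.dvd_gcd n1 n2
    rw [show Nat.gcd 40704 82083840 = 2 ^ 8 * 3 by norm_num] at hg
    rcases (Nat.Prime.dvd_mul hp).mp hg with h | h
    · have h2 := hp.dvd_of_dvd_pow h
      have := Nat.le_of_dvd (by norm_num) h2
      omega
    · have := Nat.le_of_dvd (by norm_num) h
      omega
  · intro hdvd
    have h2p : 0 < 2 * p := by omega
    have htot : (2 * p).totient ≠ 1 := by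
      rw [Nat.totient_mul ((Nat.coprime_primes Nat.prime_two hp).mpr (by omega)),
        Nat.totient_two, Nat.totient_prime hp]
      omega
    have hcyc : cyclotomic (2 * p) (ZMod p) = (X - C ((-1 : ℤ) : ZMod p)) ^ (p - 1) := by
      have hnd : ¬ p ∣ 2 := fun h => by
        have := Nat.le_of_dvd (by norm_num) h
        omega
      have h := cyclotomic_mul_prime_eq_pow_of_not_dvd (ZMod p) (n := 2) hnd
      rw [h, cyclotomic_two]
      congr 1
      rw [show ((-1 : ℤ) : ZMod p) = -1 from by norm_cast, map_neg, map_one, sub_neg_eq_add]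
    have key := RpolyAux.crux hp hdvd (RpolyAux.Rpoly_eval_neg_one t) h2p htot hcyc
    have h2 := key 2 (by omega); have h4 := key 4 (by omega); have h6 := key 6 (by omega)
    rw [RpolyAux.Eval2] at h2
    rw [RpolyAux.Eval4] at h4
    rw [RpolyAux.Eval6] at h6
    have d1 : (p : ℤ) ∣ 9564416 := by
      have e : (9564416 : ℤ) = (6406056 * (t : ℤ)^3 + 27995764 * (t : ℤ)^2
            + 43347096 * (t : ℤ) + 24725212) * (-112 * (t : ℤ)^2 - 144 * (t : ℤ) + 68)
          + (-58086 * (t : ℤ) - 92875) * (-12352 * (t : ℤ)^4 - 50112 * (t : ℤ)^3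
            - 65360 * (t : ℤ)^2 - 17856 * (t : ℤ) + 18000) := by ring
      rw [e]
      exact dvd_add (h2.mul_left _) (h4.mul_left _)
    have d2 : (p : ℤ) ∣ 12823279571200 := by
      have e : (12823279571200 : ℤ) =
          (324666808800 * (t : ℤ)^5 + 1661578704992 * (t : ℤ)^4 + 3830565425328 * (t : ℤ)^3
            + 5020352054292 * (t : ℤ)^2 + 3597319904088 * (t : ℤ) + 1160428359140)
            * (-112 * (t : ℤ)^2 - 144 * (t : ℤ) + 68)
          + (-43345050 * (t : ℤ) - 33461867) * (-838912 * (t : ℤ)^6 - 4724352 * (t : ℤ)^5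
            - 11261440 * (t : ℤ)^4 - 14397600 * (t : ℤ)^3 - 8849488 * (t : ℤ)^2
            - 241728 * (t : ℤ) + 1974960) := by ring
      rw [e]
      exact dvd_add (h2.mul_left _) (h6.mul_left _)
    have n1 : p ∣ 9564416 := by exact_mod_cast d1
    have n2 : p ∣ 12823279571200 := by exact_mod_cast d2
    have hg : p ∣ Nat.gcd 9564416 12823279571200 := Nat.dvd_gcd n1 n2
    rw [show Nat.gcd 9564416 12823279571200 = 2 ^ 8 by norm_num] at hg
    have h2d := hp.dvd_of_dvd_pow hg
    have := Nat.le_of_dvd (by norm_num) h2d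
    omega
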